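/- For n ≥ 2 and s = [n], given that for the n-qubit W state and local Hamiltonians |1⟩⟨1| the ergotropic gap across the bipartition X|X^c with |X| = k (1 ≤ k ≤ n−1) equals 2·min(k/n, 1 − k/n), the ergotropic-gap concentratable entanglement satisfies M^{(s)}_E(|W_n⟩) = (1/2^n) Σ_{k=1}^{n−1} C(n,k) · 2·min(k/n, (n−k)/n) = 1 − (1/2^{n−1}) C(n−1, ⌊(n−1)/2⌋). -/

import Mathlib

open Finset

/-- Telescoping partial sum: `∑_{k=0}^m (n-2k) C(n,k) = n C(n-1,m)` in ℤ. -/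
lemma lemA (n : ℕ) (hn : 1 ≤ n) (m : ℕ) :
    ∑ k ∈ range (m + 1), ((n : ℤ) - 2 * k) * (n.choose k) = n * ((n - 1).choose m) := by
  induction m with
  | zero => simp
  | succ m ih =>
    rw [Finset.sum_range_succ, ih]
    have hn1 : n - 1 + 1 = n := by omega
    have h1 : (m + 1) * n.choose (m + 1) = n * (n - 1).choose m := by
      have := Nat.add_one_mul_choose_eq (n - 1) m
      simp only [Nat.succ_eq_add_one, hn1] at this
      rw [this, mul_comm]
    have h2 : ((n : ℤ) - (m + 1)) * n.choose (m + 1) = n * (n - 1).choose (m + 1) := by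
      have hnat := Nat.choose_mul_succ_eq (n - 1) (m + 1)
      simp only [hn1] at hnat
      rcases le_or_gt (m + 1) n with h | h
      · have hc : ((n - 1).choose (m + 1) : ℤ) * n = n.choose (m + 1) * ((n : ℤ) - (m + 1)) := by
          have := congrArg (Nat.cast (R := ℤ)) hnat
          push_cast [Nat.cast_sub h] at this
          linarith
        linarith
      · have c1 : n.choose (m + 1) = 0 := Nat.choose_eq_zero_of_lt h
        have c2 : (n - 1).choose (m + 1) = 0 := Nat.choose_eq_zero_of_lt (by omega)
        rw [c1, c2]; simp
    have h1' : ((m : ℤ) + 1) * n.choose (m + 1) = n * (n - 1).choose m := by exact_mod_cast h1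
    push_cast
    push_cast at h1' h2
    linarith

/-- `∑_{k=0}^n |n-2k| C(n,k) = 2 n C(n-1, ⌊(n-1)/2⌋)` in ℤ. -/
lemma lemB (n : ℕ) (hn : 1 ≤ n) :
    ∑ k ∈ range (n + 1), |(n : ℤ) - 2 * k| * (n.choose k)
      = 2 * n * ((n - 1).choose ((n - 1) / 2)) := by
  set h := n / 2 with hh
  have hsplit : range (n + 1) = Ico 0 (h + 1) ∪ Ico (h + 1) (n + 1) := by
    rw [Finset.range_eq_Ico,
      Finset.Ico_union_Ico_eq_Ico (a := 0) (b := h + 1) (c := n + 1) (by omega) (by omega)]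
  rw [hsplit, Finset.sum_union (Finset.Ico_disjoint_Ico_consecutive 0 (h + 1) (n + 1))]
  have part1 : ∑ k ∈ Ico 0 (h + 1), |(n : ℤ) - 2 * k| * (n.choose k)
      = n * ((n - 1).choose h) := by
    rw [← Finset.range_eq_Ico]
    rw [← lemA n hn h]
    apply Finset.sum_congr rfl
    intro k hk
    rw [Finset.mem_range] at hk
    congr 1
    rw [abs_of_nonneg]
    have : 2 * k ≤ n := by omega
    have : (2 * k : ℤ) ≤ n := by exact_mod_cast this
    linarith
  have part2 : ∑ k ∈ Ico (h + 1) (n + 1), |(n : ℤ) - 2 * k| * (n.choose k)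
      = n * ((n - 1).choose (n - h - 1)) := by
    rw [Finset.sum_Ico_eq_sum_range]
    have hm : n + 1 - (h + 1) = n - h := by omega
    rw [hm]
    rw [← Finset.sum_range_reflect]
    have hstep : ∀ j ∈ range (n - h),
        |(n : ℤ) - 2 * ((h + 1 + (n - h - 1 - j) : ℕ) : ℤ)| * (n.choose (h + 1 + (n - h - 1 - j)))
          = ((n : ℤ) - 2 * j) * (n.choose j) := by
      intro j hj
      rw [Finset.mem_range] at hj
      have hk : h + 1 + (n - h - 1 - j) = n - j := by omega
      rw [hk]
      have hsym : n.choose (n - j) = n.choose j := Nat.choose_symm (by omega)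
      rw [hsym]
      congr 1
      have hcast : ((n - j : ℕ) : ℤ) = (n : ℤ) - j := Nat.cast_sub (by omega)
      rw [hcast]
      have h1 : 2 * j ≤ n := by omega
      have h2 : 2 * (j : ℤ) ≤ (n : ℤ) := by exact_mod_cast h1
      rw [abs_of_nonpos (by linarith)]
      ring
    rw [Finset.sum_congr rfl hstep]
    have := lemA n hn (n - h - 1)
    have hr : n - h - 1 + 1 = n - h := by omega
    rw [hr] at this
    exact this
  rw [part1, part2]
  have e1 : (n - 1).choose h = (n - 1).choose ((n - 1) / 2) := by
    rw [← Nat.choose_symm (show (n - 1) / 2 ≤ n - 1 by omega)]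
    congr 1
    omega
  have e2 : n - h - 1 = (n - 1) / 2 := by omega
  rw [e1, e2]
  ring

lemma lemC (n : ℕ) (hn : 2 ≤ n) :
    ∑ k ∈ Finset.Icc 1 (n - 1), (n.choose k : ℤ) * ((n : ℤ) - |(n : ℤ) - 2 * k|)
      = n * 2 ^ n - 2 * n * ((n - 1).choose ((n - 1) / 2)) := by
  have hext : ∑ k ∈ Finset.Icc 1 (n - 1), (n.choose k : ℤ) * ((n : ℤ) - |(n : ℤ) - 2 * k|)
      = ∑ k ∈ range (n + 1), (n.choose k : ℤ) * ((n : ℤ) - |(n : ℤ) - 2 * k|) := by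
    apply Finset.sum_subset
    · intro k hk
      simp only [Finset.mem_Icc] at hk
      simp only [Finset.mem_range]
      omega
    · intro k hk hk'
      simp only [Finset.mem_range] at hk
      simp only [Finset.mem_Icc] at hk'
      have hc : k = 0 ∨ k = n := by omega
      rcases hc with hc | hc
      · subst hc
        simp [abs_of_nonneg (show (0:ℤ) ≤ n by positivity)]
      · subst hc
        have : |(k : ℤ) - 2 * k| = k := by
          rw [abs_of_nonpos (by omega)]; ring
        rw [this]; ring
  rw [hext]
  have hdist : ∑ k ∈ range (n + 1), (n.choose k : ℤ) * ((n : ℤ) - |(n : ℤ) - 2 * k|)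
      = (n : ℤ) * ∑ k ∈ range (n + 1), (n.choose k : ℤ)
        - ∑ k ∈ range (n + 1), |(n : ℤ) - 2 * k| * (n.choose k) := by
    rw [Finset.mul_sum, ← Finset.sum_sub_distrib]
    apply Finset.sum_congr rfl
    intro k _
    ring
  rw [hdist, lemB n (by omega)]
  have hc : ∑ k ∈ range (n + 1), ((n.choose k : ℤ)) = 2 ^ n := by
    exact_mod_cast congrArg (Nat.cast (R := ℤ)) (Nat.sum_range_choose n)
  rw [hc]

/-- W-state value: summing the gaps `2·min(k/n,(n−k)/n)` over bipartitions with
`|X| = k` (multiplicity `C(n,k)`) yields `1 − C(n−1,⌊(n−1)/2⌋)/2^{n−1}`. -/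
theorem stmt9 (n : ℕ) (hn : 2 ≤ n) :
    (1 / 2 ^ n : ℝ) *
        ∑ k ∈ Finset.Icc 1 (n - 1),
          (n.choose k : ℝ) * (2 * min ((k : ℝ) / n) (((n : ℝ) - k) / n))
      = 1 - ((n - 1).choose ((n - 1) / 2) : ℝ) / 2 ^ (n - 1) := by
  have hn0 : (0 : ℝ) < n := by positivity
  have hterm : ∀ k ∈ Finset.Icc 1 (n - 1),
      (n.choose k : ℝ) * (2 * min ((k : ℝ) / n) (((n : ℝ) - k) / n))
        = (((n.choose k : ℤ) * ((n : ℤ) - |(n : ℤ) - 2 * k|) : ℤ) : ℝ) / n := by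
    intro k hk
    simp only [Finset.mem_Icc] at hk
    push_cast
    rcases le_total ((k : ℝ) / n) (((n : ℝ) - k) / n) with h | h
    · rw [min_eq_left h]
      have h' : (k : ℝ) ≤ (n : ℝ) - k := by
        have := (div_le_div_iff_of_pos_right hn0).mp h
        linarith [this]
      rw [abs_of_nonneg (by linarith : (0:ℝ) ≤ (n : ℝ) - 2 * k)]
      field_simp
      ring
    · rw [min_eq_right h]
      have h' : (n : ℝ) - k ≤ (k : ℝ) := by
        have := (div_le_div_iff_of_pos_right hn0).mp h
        linarith [this]
      rw [abs_of_nonpos (by linarith : (n : ℝ) - 2 * k ≤ 0)]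
      field_simp
      ring
  rw [Finset.sum_congr rfl hterm, ← Finset.sum_div, ← Int.cast_sum, lemC n hn]
  have hpow : (2 : ℝ) ^ n = 2 * 2 ^ (n - 1) := by
    rw [← pow_succ']
    congr 1
    omega
  push_cast
  rw [hpow]
  field_simp
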